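/- With A the n×n complex matrix defined in the context and w = diag(−1,−1,1,…,1) the n×n diagonal matrix with first two diagonal entries −1 and all others 1, for every t ∈ ℝ the first column of exp(t·A)·w equals −cos(t)·e₁ − sin(t)·u, where e₁ is the first standard basis vector of ℂⁿ and u ∈ ℂⁿ is the column vector whose first entry is z and whose remaining n−1 entries are those of v. -/

import Mathlib

open Matrix

set_option maxHeartbeats 2000000 in
/-- With `A` the `n×n` complex matrix defined in the context and
`w = diag(−1,−1,1,…,1)`, for every `t ∈ ℝ` the first column of `exp(t·A)·w`
equals `−cos(t)·e₁ − sin(t)·u`, where `e₁` is the first standard basis vector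
of `ℂⁿ` and `u` is the column vector with first entry `z` and remaining
entries those of `v`. -/
theorem stmt_6 (n : ℕ) (hn : 2 ≤ n) (z : ℂ) (hz : z + starRingEnd ℂ z = 0)
    (v : Fin (n - 1) → ℂ) (hv : v ≠ 0)
    (hnorm : z * starRingEnd ℂ z + ∑ i, starRingEnd ℂ (v i) * v i = 1)
    (A w : Matrix (Fin 1 ⊕ Fin (n - 1)) (Fin 1 ⊕ Fin (n - 1)) ℂ)
    (hA : A = Matrix.fromBlocks
      (Matrix.of fun _ _ => z)
      (Matrix.of fun _ j => -starRingEnd ℂ (v j))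
      (Matrix.of fun i _ => v i)
      (Matrix.of fun i j =>
        -(v i * z * starRingEnd ℂ (v j)) / (∑ k, starRingEnd ℂ (v k) * v k)))
    (hw : w = Matrix.diagonal (fun i => match i with
      | Sum.inl _ => (-1 : ℂ)
      | Sum.inr j => if (j : ℕ) = 0 then -1 else 1)) :
    ∀ t : ℝ,
      (fun i => (NormedSpace.exp (t • A) * w) i (Sum.inl 0)) =
        fun i => -(Real.cos t : ℂ) * (Pi.single (Sum.inl 0) 1 : Fin 1 ⊕ Fin (n - 1) → ℂ) i
          - (Real.sin t : ℂ) * Sum.elim (fun _ : Fin 1 => z) v i := by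
  intro t
  letI : SeminormedRing (Matrix (Fin 1 ⊕ Fin (n - 1)) (Fin 1 ⊕ Fin (n - 1)) ℂ) :=
    Matrix.linftyOpSemiNormedRing
  letI : NormedRing (Matrix (Fin 1 ⊕ Fin (n - 1)) (Fin 1 ⊕ Fin (n - 1)) ℂ) :=
    Matrix.linftyOpNormedRing
  letI : NormedAlgebra ℝ (Matrix (Fin 1 ⊕ Fin (n - 1)) (Fin 1 ⊕ Fin (n - 1)) ℂ) :=
    Matrix.linftyOpNormedAlgebra
  have hS : (∑ k, starRingEnd ℂ (v k) * v k) ≠ 0 := by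
    have hSn : (∑ k, starRingEnd ℂ (v k) * v k) = ((∑ k, Complex.normSq (v k) : ℝ) : ℂ) := by
      push_cast
      refine Finset.sum_congr rfl fun k _ => ?_
      rw [mul_comm, Complex.mul_conj]
    rw [hSn]
    intro h
    apply hv
    have h0 : (∑ k, Complex.normSq (v k) : ℝ) = 0 := by exact_mod_cast h
    have := (Finset.sum_eq_zero_iff_of_nonneg (fun k _ => Complex.normSq_nonneg (v k))).mp h0
    funext k
    exact Complex.normSq_eq_zero.mp (this k (Finset.mem_univ k))
  have hAe : A *ᵥ (Pi.single (Sum.inl 0) 1 : (Fin 1 ⊕ Fin (n-1)) → ℂ)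
      = Sum.elim (fun _ : Fin 1 => z) v := by
    rw [hA]
    funext i
    rcases i with i | i <;> simp
  have hAu : A *ᵥ (Sum.elim (fun _ : Fin 1 => z) v)
      = -(Pi.single (Sum.inl 0) 1 : (Fin 1 ⊕ Fin (n-1)) → ℂ) := by
    rw [hA]
    funext i
    rcases i with i | i
    · have hi : i = 0 := Subsingleton.elim _ _
      subst hi
      simp [mulVec, dotProduct, Fintype.sum_sum_type]
      have hc : starRingEnd ℂ z = -z := by linear_combination hz
      have hSn : (∑ i, starRingEnd ℂ (v i) * v i) = 1 + z * z := by
        rw [hc] at hnorm; linear_combination hnorm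
      rw [hSn]
      ring
    · simp [mulVec, dotProduct, Fintype.sum_sum_type]
      have h1 : ∑ x, (-(v i * z * starRingEnd ℂ (v x)) / ∑ k, starRingEnd ℂ (v k) * v k) * v x
          = (-(v i * z) * ∑ x, starRingEnd ℂ (v x) * v x) / (∑ k, starRingEnd ℂ (v k) * v k) := by
        rw [Finset.mul_sum, Finset.sum_div]
        refine Finset.sum_congr rfl fun x _ => by ring
      rw [h1, mul_div_assoc, div_self hS]
      ring
  set e1 : (Fin 1 ⊕ Fin (n-1)) → ℂ := Pi.single (Sum.inl 0) 1 with he1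
  set u : (Fin 1 ⊕ Fin (n-1)) → ℂ := Sum.elim (fun _ : Fin 1 => z) v with hu
  have hpow : ∀ k : ℕ, (A ^ (2*k)) *ᵥ e1 = ((-1 : ℂ)^k) • e1
      ∧ (A ^ (2*k+1)) *ᵥ e1 = ((-1 : ℂ)^k) • u := by
    intro k
    induction k with
    | zero => simp [hAe]
    | succ k ih =>
      obtain ⟨ihe, iho⟩ := ih
      have h2 : 2*(k+1) = (2*k+1)+1 := by ring
      have he2 : A ^ (2*(k+1)) *ᵥ e1 = ((-1 : ℂ)^(k+1)) • e1 := by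
        rw [h2, pow_succ', ← mulVec_mulVec, iho, mulVec_smul, hAu]
        rw [pow_succ]
        module
      refine ⟨he2, ?_⟩
      rw [pow_succ', ← mulVec_mulVec, he2, mulVec_smul, hAe]
  -- the continuous linear map M ↦ M *ᵥ e1
  let L0 : Matrix (Fin 1 ⊕ Fin (n-1)) (Fin 1 ⊕ Fin (n-1)) ℂ →ₗ[ℝ] ((Fin 1 ⊕ Fin (n-1)) → ℂ) :=
    { toFun := fun M => M *ᵥ e1
      map_add' := fun M N => Matrix.add_mulVec M N e1
      map_smul' := fun r M => Matrix.smul_mulVec r M e1 }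
  let L : Matrix (Fin 1 ⊕ Fin (n-1)) (Fin 1 ⊕ Fin (n-1)) ℂ →L[ℝ] ((Fin 1 ⊕ Fin (n-1)) → ℂ) :=
    LinearMap.toContinuousLinearMap L0
  have hsum : Summable (fun k : ℕ => (Nat.factorial k : ℝ)⁻¹ • (t • A)^k) :=
    NormedSpace.expSeries_summable' (𝕂 := ℝ) (t • A)
  have hexp : NormedSpace.exp (t • A) *ᵥ e1
      = ∑' k : ℕ, ((Nat.factorial k : ℝ)⁻¹ • (t • A)^k) *ᵥ e1 := by
    rw [NormedSpace.exp_eq_tsum (𝕂 := ℝ)]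
    exact (L.map_tsum hsum)
  have hterm : ∀ k : ℕ, ((Nat.factorial k : ℝ)⁻¹ • (t • A)^k) *ᵥ e1
      = (((Nat.factorial k : ℝ)⁻¹ * t^k : ℝ) : ℂ) • ((A^k) *ᵥ e1) := by
    intro k
    rw [smul_pow, smul_smul, Matrix.smul_mulVec]
    funext i
    simp [Complex.real_smul]
  have hcos : HasSum
      (fun k : ℕ => (((Nat.factorial (2*k) : ℝ)⁻¹ * t^(2*k) : ℝ) : ℂ) • ((A^(2*k)) *ᵥ e1))
      (Complex.cos t • e1) := by
    have h := (Complex.hasSum_cos (t : ℂ)).smul_const e1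
    have hfun : ∀ k : ℕ, (((Nat.factorial (2*k) : ℝ)⁻¹ * t^(2*k) : ℝ) : ℂ) • ((A^(2*k)) *ᵥ e1)
        = ((-1 : ℂ)^k * (t : ℂ)^(2*k) / ((2*k).factorial : ℂ)) • e1 := by
      intro k
      rw [(hpow k).1, smul_smul]
      congr 1
      push_cast
      ring
    simpa only [hfun] using h
  have hsin : HasSum
      (fun k : ℕ => (((Nat.factorial (2*k+1) : ℝ)⁻¹ * t^(2*k+1) : ℝ) : ℂ) • ((A^(2*k+1)) *ᵥ e1))
      (Complex.sin t • u) := by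
    have h := (Complex.hasSum_sin (t : ℂ)).smul_const u
    have hfun : ∀ k : ℕ, (((Nat.factorial (2*k+1) : ℝ)⁻¹ * t^(2*k+1) : ℝ) : ℂ) • ((A^(2*k+1)) *ᵥ e1)
        = ((-1 : ℂ)^k * (t : ℂ)^(2*k+1) / ((2*k+1).factorial : ℂ)) • u := by
      intro k
      rw [(hpow k).2, smul_smul]
      congr 1
      push_cast
      ring
    simpa only [hfun] using h
  have key : NormedSpace.exp (t • A) *ᵥ e1 = Complex.cos t • e1 + Complex.sin t • u := by
    rw [hexp, tsum_congr hterm]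
    exact (HasSum.even_add_odd hcos hsin).tsum_eq
  -- conclude entrywise
  funext i
  have hentry : NormedSpace.exp (t • A) i (Sum.inl 0)
      = (NormedSpace.exp (t • A) *ᵥ e1) i := by
    rw [he1, mulVec_single]
    simp
  have hwcol : (NormedSpace.exp (t • A) * w) i (Sum.inl 0)
      = NormedSpace.exp (t • A) i (Sum.inl 0) * (-1) := by
    rw [hw, Matrix.mul_diagonal]
  rw [hwcol, hentry, key]
  simp only [Pi.add_apply, Pi.smul_apply, smul_eq_mul]
  rw [← Complex.ofReal_cos, ← Complex.ofReal_sin] at *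
  push_cast
  ring
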